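/- Conditional probability of a positive label on likelihood intervals is monotone under rightward interval shifts: if ℓ(X) = P(Y=1 | X) and [l₁, u₁], [l₂, u₂] are intervals with l₁ ≤ l₂ and u₁ ≤ u₂ (both of positive probability), then P(Y=1 | ℓ(X) ∈ [l₂, u₂]) ≥ P(Y=1 | ℓ(X) ∈ [l₁, u₁]). -/

import Mathlib

open MeasureTheory

/-- The conditional probability of a positive label on likelihood intervals is
monotone under rightward interval shifts: if `L = ℓ(X) = P(Y = 1 | X)`
(encoded by `hcond`), `l₁ ≤ l₂`, `u₁ ≤ u₂` and both events have positive
probability, then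
`P(Y = 1 | L ∈ [l₂, u₂]) ≥ P(Y = 1 | L ∈ [l₁, u₁])`. -/
theorem stmt_15 {Ω : Type*} [MeasurableSpace Ω] (P : Measure Ω)
    [IsProbabilityMeasure P]
    (L : Ω → ℝ) (Yv : Ω → Bool) (hLmeas : Measurable L)
    (hrange : ∀ ω, L ω ∈ Set.Icc (0:ℝ) 1)
    (hcond : ∀ S : Set ℝ, MeasurableSet S →
      (P ({ω | Yv ω = true} ∩ L ⁻¹' S)).toReal = ∫ ω in L ⁻¹' S, L ω ∂P)
    (l₁ u₁ l₂ u₂ : ℝ) (hl : l₁ ≤ l₂) (hu : u₁ ≤ u₂)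
    (hp1 : 0 < P (L ⁻¹' Set.Icc l₁ u₁)) (hp2 : 0 < P (L ⁻¹' Set.Icc l₂ u₂)) :
    (P ({ω | Yv ω = true} ∩ L ⁻¹' Set.Icc l₁ u₁)).toReal
        / (P (L ⁻¹' Set.Icc l₁ u₁)).toReal ≤
      (P ({ω | Yv ω = true} ∩ L ⁻¹' Set.Icc l₂ u₂)).toReal
        / (P (L ⁻¹' Set.Icc l₂ u₂)).toReal := by
  set S1 := Set.Icc l₁ u₁ with hS1def
  set S2 := Set.Icc l₂ u₂ with hS2def
  have hS1 : MeasurableSet S1 := measurableSet_Icc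
  have hS2 : MeasurableSet S2 := measurableSet_Icc
  have hJm : MeasurableSet (S1 ∩ S2) := hS1.inter hS2
  have hD1m : MeasurableSet (S1 \ S2) := hS1.diff hS2
  have hD2m : MeasurableSet (S2 \ S1) := hS2.diff hS1
  have hint : Integrable L P := by
    refine (integrable_const (1:ℝ)).mono' hLmeas.aestronglyMeasurable ?_
    filter_upwards with ω
    rw [Real.norm_eq_abs, abs_le]
    exact ⟨le_trans (by norm_num) (hrange ω).1, (hrange ω).2⟩
  set m := (P (L ⁻¹' (S1 ∩ S2))).toReal with hm
  set p1 := (P (L ⁻¹' (S1 \ S2))).toReal with hp1d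
  set p2 := (P (L ⁻¹' (S2 \ S1))).toReal with hp2d
  set s := ∫ ω in L ⁻¹' (S1 ∩ S2), L ω ∂P with hs
  set a1 := ∫ ω in L ⁻¹' (S1 \ S2), L ω ∂P with ha1
  set a2 := ∫ ω in L ⁻¹' (S2 \ S1), L ω ∂P with ha2
  -- generic upper/lower bounds for set integrals of L
  have ub : ∀ (S : Set ℝ), MeasurableSet S → ∀ c : ℝ, (∀ x ∈ S, x ≤ c) →
      ∫ ω in L ⁻¹' S, L ω ∂P ≤ c * (P (L ⁻¹' S)).toReal := by
    intro S hS c hc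
    have : ∫ ω in L ⁻¹' S, L ω ∂P ≤ ∫ _ω in L ⁻¹' S, c ∂P := by
      refine setIntegral_mono_on hint.integrableOn (integrableOn_const ?_)
        (hLmeas hS) (fun ω hω => hc _ hω)
      exact measure_ne_top P _
    simpa [setIntegral_const, mul_comm, measureReal_def] using this
  have lb : ∀ (S : Set ℝ), MeasurableSet S → ∀ c : ℝ, (∀ x ∈ S, c ≤ x) →
      c * (P (L ⁻¹' S)).toReal ≤ ∫ ω in L ⁻¹' S, L ω ∂P := by
    intro S hS c hc
    have : ∫ _ω in L ⁻¹' S, c ∂P ≤ ∫ ω in L ⁻¹' S, L ω ∂P := by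
      refine setIntegral_mono_on (integrableOn_const ?_) hint.integrableOn
        (hLmeas hS) (fun ω hω => hc _ hω)
      exact measure_ne_top P _
    simpa [setIntegral_const, mul_comm, measureReal_def] using this
  -- disjoint decompositions of S1 and S2
  have hdisj1 : Disjoint (L ⁻¹' (S1 ∩ S2)) (L ⁻¹' (S1 \ S2)) := by
    refine Disjoint.preimage L ?_
    rw [Set.disjoint_left]
    rintro x ⟨_, h2⟩ ⟨_, hn⟩
    exact hn h2
  have hdisj2 : Disjoint (L ⁻¹' (S1 ∩ S2)) (L ⁻¹' (S2 \ S1)) := by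
    refine Disjoint.preimage L ?_
    rw [Set.disjoint_left]
    rintro x ⟨h1, _⟩ ⟨_, hn⟩
    exact hn h1
  have hU1 : L ⁻¹' S1 = L ⁻¹' (S1 ∩ S2) ∪ L ⁻¹' (S1 \ S2) := by
    rw [← Set.preimage_union, Set.inter_union_diff]
  have hU2 : L ⁻¹' S2 = L ⁻¹' (S1 ∩ S2) ∪ L ⁻¹' (S2 \ S1) := by
    rw [← Set.preimage_union, Set.inter_comm, Set.inter_union_diff]
  have hPd1 : (P (L ⁻¹' S1)).toReal = m + p1 := by
    rw [hU1, measure_union hdisj1 (hLmeas hD1m),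
      ENNReal.toReal_add (measure_ne_top _ _) (measure_ne_top _ _)]
  have hPd2 : (P (L ⁻¹' S2)).toReal = m + p2 := by
    rw [hU2, measure_union hdisj2 (hLmeas hD2m),
      ENNReal.toReal_add (measure_ne_top _ _) (measure_ne_top _ _)]
  have hId1 : ∫ ω in L ⁻¹' S1, L ω ∂P = s + a1 := by
    rw [hU1, setIntegral_union hdisj1 (hLmeas hD1m) hint.integrableOn
      hint.integrableOn]
  have hId2 : ∫ ω in L ⁻¹' S2, L ω ∂P = s + a2 := by
    rw [hU2, setIntegral_union hdisj2 (hLmeas hD2m) hint.integrableOn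
      hint.integrableOn]
  -- pointwise bounds on pieces
  have hsu : s ≤ u₁ * m := ub _ hJm u₁ fun x hx => hx.1.2
  have hsl : l₂ * m ≤ s := lb _ hJm l₂ fun x hx => hx.2.1
  have ha1l : a1 ≤ l₂ * p1 := by
    refine ub _ hD1m l₂ fun x hx => ?_
    by_contra h
    exact hx.2 ⟨le_of_not_ge h, hx.1.2.trans hu⟩
  have ha1u : a1 ≤ u₁ * p1 := ub _ hD1m u₁ fun x hx => hx.1.2
  have ha2u : u₁ * p2 ≤ a2 := by
    refine lb _ hD2m u₁ fun x hx => ?_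
    by_contra h
    exact hx.2 ⟨hl.trans hx.1.1, le_of_not_ge h⟩
  have ha2l : l₂ * p2 ≤ a2 := lb _ hD2m l₂ fun x hx => hx.1.1
  -- nonnegativity
  have hmn : (0:ℝ) ≤ m := ENNReal.toReal_nonneg
  have hp1n : (0:ℝ) ≤ p1 := ENNReal.toReal_nonneg
  have hp2n : (0:ℝ) ≤ p2 := ENNReal.toReal_nonneg
  have hsn : (0:ℝ) ≤ s := setIntegral_nonneg (hLmeas hJm) fun ω _ => (hrange ω).1
  have ha1n : (0:ℝ) ≤ a1 := setIntegral_nonneg (hLmeas hD1m) fun ω _ => (hrange ω).1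
  have ha2n : (0:ℝ) ≤ a2 := setIntegral_nonneg (hLmeas hD2m) fun ω _ => (hrange ω).1
  have hu1n : (0:ℝ) ≤ u₁ := by
    obtain ⟨ω, hω⟩ := nonempty_of_measure_ne_zero hp1.ne'
    exact le_trans (hrange ω).1 hω.2
  -- positivity of denominators
  have hden1 : 0 < (P (L ⁻¹' S1)).toReal :=
    ENNReal.toReal_pos hp1.ne' (measure_ne_top _ _)
  have hden2 : 0 < (P (L ⁻¹' S2)).toReal :=
    ENNReal.toReal_pos hp2.ne' (measure_ne_top _ _)
  rw [hcond _ hS1, hcond _ hS2, div_le_div_iff₀ hden1 hden2, hId1, hId2,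
    hPd1, hPd2]
  rcases le_or_gt l₂ u₁ with hcase | hcase
  · nlinarith [mul_le_mul_of_nonneg_right hsu hp2n,
      mul_le_mul_of_nonneg_right ha2u hmn,
      mul_le_mul_of_nonneg_right ha1l hmn,
      mul_le_mul_of_nonneg_right hsl hp1n,
      mul_le_mul_of_nonneg_right ha1l hp2n,
      mul_le_mul_of_nonneg_right ha2u hp1n,
      mul_le_mul_of_nonneg_right (mul_le_mul_of_nonneg_right hcase hp1n) hp2n]
  · have hempty : S1 ∩ S2 = ∅ := by
      rw [hS1def, hS2def, Set.Icc_inter_Icc, max_eq_right hl, min_eq_left hu]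
      exact Set.Icc_eq_empty (not_le.2 hcase)
    have hm0 : m = 0 := by rw [hm, hempty]; simp
    have hs0 : s = 0 := by rw [hs, hempty]; simp
    rw [hm0, hs0]
    nlinarith [mul_le_mul_of_nonneg_right ha1u hp2n,
      mul_le_mul_of_nonneg_right ha2l hp1n,
      mul_le_mul_of_nonneg_right (mul_le_mul_of_nonneg_right hcase.le hp1n) hp2n]
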